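/- arXiv:1511.05613 — 2 statements merged into one kernel-verified Lean document; each statement's English description precedes it below -/
import Mathlib

section
/- Let β ≥ 2 be a real number and let s, δ satisfy the hypotheses of the nonlinear power estimate: s > 3/2 and 2/(β−1) − 3/2 ≤ δ if β is an integer, and 5/2 < s < β − [β] + 5/2 and 2/([β]−1) − 3/2 ≤ δ otherwise. Then there is a constant C, independent of the functions involved, such that for all w₁, w₂ ∈ H_{s,δ}(ℝ³) with w₁ ≥ 0 and w₂ ≥ 0: ‖w₁^β − w₂^β‖_{L²_{δ+2}} ≤ C_d ‖w₁ − w₂‖_{L²_δ}, where the constant C_d satisfies C_d² ≤ C (β²/2)(‖w₁‖_{H_{s,δ}}^{2(β−1)} + ‖w₂‖_{H_{s,δ}}^{2(β−1)}). -/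
open MeasureTheory Real Set
open scoped FourierTransform ENNReal NNReal

noncomputable section

abbrev E3 : Type := EuclideanSpace ℝ (Fin 3)

/-- A dyadic partition of unity on ℝ³ as in the paper: `ψ j ∈ C_0^∞`, nonnegative,
`supp ψ₀ ⊆ {|x| ≤ 2}`, `ψ₀ = 1` on `{|x| ≤ 1}`, for `j ≥ 1`
`supp ψ_j ⊆ {2^(j-2) ≤ |x| ≤ 2^(j+1)}`, `ψ_j = 1` on `{2^(j-1) ≤ |x| ≤ 2^j}`, and
`|∂^α ψ_j| ≤ C_α 2^(-|α| j)` with `C_α` independent of `j`. -/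
structure DyadicPartition where
  ψ : ℕ → E3 → ℝ
  smooth : ∀ j, ContDiff ℝ (⊤ : ℕ∞) (ψ j)
  nonneg : ∀ j x, 0 ≤ ψ j x
  compSupp : ∀ j, HasCompactSupport (ψ j)
  supp_zero : ∀ x : E3, ψ 0 x ≠ 0 → ‖x‖ ≤ 2
  one_zero : ∀ x : E3, ‖x‖ ≤ 1 → ψ 0 x = 1
  supp_succ : ∀ j : ℕ, 1 ≤ j → ∀ x : E3, ψ j x ≠ 0 →
    (2:ℝ) ^ ((j:ℤ) - 2) ≤ ‖x‖ ∧ ‖x‖ ≤ (2:ℝ) ^ ((j:ℤ) + 1)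
  one_succ : ∀ j : ℕ, 1 ≤ j → ∀ x : E3,
    (2:ℝ) ^ ((j:ℤ) - 1) ≤ ‖x‖ → ‖x‖ ≤ (2:ℝ) ^ (j:ℤ) → ψ j x = 1
  deriv_bound : ∀ n : ℕ, ∃ C : ℝ, ∀ (j : ℕ) (x : E3),
    ‖iteratedFDeriv ℝ n (ψ j) x‖ ≤ C * (2:ℝ) ^ (-(n:ℤ) * (j:ℤ))

/-- The squared `H^s` norm `∫ (1+|ξ|²)^s |𝓕f(ξ)|² dξ` of a complex-valued function. -/
def HsNormSq (s : ℝ) (f : E3 → ℂ) : ℝ≥0∞ :=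
  ∫⁻ ξ : E3, ENNReal.ofReal ((1 + ‖ξ‖ ^ 2) ^ s) * (‖𝓕 f ξ‖₊ : ℝ≥0∞) ^ 2

/-- The squared weighted Sobolev norm
`‖u‖²_{H_{s,δ}} = Σ_j 2^{(3/2+δ)2j} ‖(ψ_j u)_{2^j}‖²_{H^s}`,
where `(ψ_j u)_{2^j}(x) = ψ_j(2^j x) u(2^j x)`. -/
def HwNormSq (P : DyadicPartition) (s δ : ℝ) (u : E3 → ℝ) : ℝ≥0∞ :=
  ∑' j : ℕ, ENNReal.ofReal ((2:ℝ) ^ ((3 + 2 * δ) * (j:ℝ))) *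
    HsNormSq s (fun x : E3 =>
      ((P.ψ j (((2:ℝ) ^ (j:ℕ)) • x) * u (((2:ℝ) ^ (j:ℕ)) • x) : ℝ) : ℂ))

/-- Membership in the weighted Sobolev space `H_{s,δ}` (for functions). -/
def MemH (P : DyadicPartition) (s δ : ℝ) (u : E3 → ℝ) : Prop :=
  LocallyIntegrable u volume ∧ HwNormSq P s δ u < ⊤

/-- The weighted Sobolev norm `‖u‖_{H_{s,δ}}`. -/
def Hnorm (P : DyadicPartition) (s δ : ℝ) (u : E3 → ℝ) : ℝ :=
  Real.sqrt (HwNormSq P s δ u).toReal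

/-- The squared weighted `L²_δ` norm `∫ (1+|x|)^{2δ} |u(x)|² dx`. -/
def L2wNormSq (δ : ℝ) (u : E3 → ℝ) : ℝ≥0∞ :=
  ∫⁻ x : E3, ENNReal.ofReal ((1 + ‖x‖) ^ (2 * δ)) * (‖u x‖₊ : ℝ≥0∞) ^ 2

/-- The weighted `L²_δ` norm. -/
def L2wNorm (δ : ℝ) (u : E3 → ℝ) : ℝ :=
  Real.sqrt (L2wNormSq δ u).toReal

/-- Membership in `L²_δ`. -/
def MemL2w (δ : ℝ) (u : E3 → ℝ) : Prop :=
  AEStronglyMeasurable u volume ∧ L2wNormSq δ u < ⊤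

/-- The partial derivative `∂_a f (x)`. -/
def pd (f : E3 → ℝ) (a : Fin 3) (x : E3) : ℝ :=
  fderiv ℝ f x (EuclideanSpace.single a 1)


section GeneralFourier

open Function
open scoped Convolution RealInnerProductSpace

variable {V : Type*} [NormedAddCommGroup V] [InnerProductSpace ℝ V] [MeasurableSpace V]
  [BorelSpace V] [FiniteDimensional ℝ V]

lemma fourier_conv (ψ : V → ℝ) (f : V → ℂ) (hψ : Integrable ψ) (hf : Integrable f) (ξ : V) :
    𝓕 (ψ ⋆[ContinuousLinearMap.lsmul ℝ ℝ, volume] f) ξ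
      = 𝓕 (fun x => (ψ x : ℂ)) ξ * 𝓕 f ξ := by
  have hbase : Integrable (fun p : V × V => ψ p.2 • f (p.1 - p.2))
      (volume.prod volume) := by
    simpa using hψ.convolution_integrand (ContinuousLinearMap.lsmul ℝ ℝ) hf
  have hcont : Continuous (fun x : V => (𝐞 (-⟪x, ξ⟫) : ℂ)) := by
    have h1 : Continuous (fun x : V => -⟪x, ξ⟫) := (continuous_id.inner continuous_const).neg
    exact continuous_subtype_val.comp (Real.continuous_fourierChar.comp h1)
  have hF : Integrable (uncurry fun x t : V => (𝐞 (-⟪x, ξ⟫) : ℂ) * (ψ t • f (x - t)))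
      (volume.prod volume) := by
    refine (hbase.norm.mono' ?_ ?_)
    · exact ((hcont.comp continuous_fst).aestronglyMeasurable.mul hbase.aestronglyMeasurable)
    · refine Filter.Eventually.of_forall fun p => ?_
      simp [uncurry, norm_mul, Circle.norm_coe]
  calc 𝓕 (ψ ⋆[ContinuousLinearMap.lsmul ℝ ℝ, volume] f) ξ
      = ∫ x : V, ∫ t : V, (𝐞 (-⟪x, ξ⟫) : ℂ) * (ψ t • f (x - t)) := by
        rw [Real.fourier_eq]
        congr 1 with x
        rw [convolution_def, Circle.smul_def, smul_eq_mul, ← integral_const_mul]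
        simp [ContinuousLinearMap.lsmul_apply]
    _ = ∫ t : V, ∫ x : V, (𝐞 (-⟪x, ξ⟫) : ℂ) * (ψ t • f (x - t)) :=
        integral_integral_swap hF
    _ = ∫ t : V, ((𝐞 (-⟪t, ξ⟫) : ℂ) * (ψ t : ℂ)) * 𝓕 f ξ := by
        congr 1 with t
        have : ∀ x : V, (𝐞 (-⟪x, ξ⟫) : ℂ) * (ψ t • f (x - t))
            = ψ t • ((𝐞 (-⟪x, ξ⟫) : ℂ) * f (x - t)) := fun x => mul_smul_comm _ _ _
        simp_rw [this, integral_smul]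
        have htr : (∫ x : V, (𝐞 (-⟪x, ξ⟫) : ℂ) * f (x - t))
            = (𝐞 (-⟪t, ξ⟫) : ℂ) * 𝓕 f ξ := by
          have h2 := congrFun (VectorFourier.fourierIntegral_comp_add_right 𝐞
            (volume : Measure V) (innerₗ V) f (-t)) ξ
          simp only [Function.comp, innerₗ_apply_apply, inner_neg_left,
            Circle.smul_def, smul_eq_mul] at h2 ⊢
          rw [show 𝓕 f ξ = VectorFourier.fourierIntegral 𝐞 volume (innerₗ V) f ξ from rfl, ← h2]
          simp_rw [VectorFourier.fourierIntegral, Circle.smul_def, smul_eq_mul, innerₗ_apply_apply,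
            sub_eq_add_neg, Function.comp]
        rw [htr, Complex.real_smul]
        ring
    _ = (∫ t : V, (𝐞 (-⟪t, ξ⟫) : ℂ) * (ψ t : ℂ)) * 𝓕 f ξ := integral_mul_const _ _
    _ = 𝓕 (fun x => (ψ x : ℂ)) ξ * 𝓕 f ξ := by
        congr 1

lemma ae_norm_le_integral_fourier [CompleteSpace V] (f : V → ℂ) (hf : Integrable f)
    (h'f : Integrable (𝓕 f)) :
    ∀ᵐ x : V, ‖f x‖ ≤ ∫ ξ : V, ‖𝓕 f ξ‖ := by
  classical
  set φ : ℕ → ContDiffBump (0 : V) := fun n =>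
    ⟨(n + 1 : ℝ)⁻¹, 2 * (n + 1 : ℝ)⁻¹, by positivity, by
      nlinarith [inv_pos.2 (by positivity : (0:ℝ) < (n:ℝ) + 1)]⟩ with hφdef
  have hφ : Filter.Tendsto (fun n => (φ n).rOut) Filter.atTop (nhds 0) := by
    have h1 : Filter.Tendsto (fun n : ℕ => 1 / ((n : ℝ) + 1)) Filter.atTop (nhds 0) :=
      tendsto_one_div_add_atTop_nhds_zero_nat
    have := h1.const_mul (2 : ℝ)
    simpa [hφdef, one_div, mul_zero] using this
  have h'φ : ∀ᶠ n in Filter.atTop, (φ n).rOut ≤ 2 * (φ n).rIn :=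
    Filter.Eventually.of_forall fun n => le_of_eq rfl
  have hconv := ContDiffBump.ae_convolution_tendsto_right_of_locallyIntegrable
    (μ := (volume : Measure V)) hφ h'φ hf.locallyIntegrable
  filter_upwards [hconv] with x hx
  refine le_of_tendsto hx.norm (Filter.Eventually.of_forall fun n => ?_)
  set ψ : V → ℝ := (φ n).normed volume with hψdef
  have hψint : Integrable ψ := (φ n).integrable_normed
  have hψc : Continuous ψ := (φ n).continuous_normed
  have hψcs : HasCompactSupport ψ := (φ n).hasCompactSupport_normed
  set h : V → ℂ := ψ ⋆[ContinuousLinearMap.lsmul ℝ ℝ, volume] f with hhdef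
  have hcont : Continuous h :=
    hψcs.continuous_convolution_left _ hψc hf.locallyIntegrable
  have hhint : Integrable h := hψint.integrable_convolution _ hf
  have hFh : ∀ ξ, 𝓕 h ξ = 𝓕 (fun x => (ψ x : ℂ)) ξ * 𝓕 f ξ := fun ξ =>
    fourier_conv ψ f hψint hf ξ
  have hFψ : ∀ ξ : V, ‖𝓕 (fun x => (ψ x : ℂ)) ξ‖ ≤ 1 := by
    intro ξ
    refine (VectorFourier.norm_fourierIntegral_le_integral_norm 𝐞 volume (innerₗ V) _ ξ).trans ?_
    have : ∀ v : V, ‖((ψ v : ℂ))‖ = ψ v := fun v => by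
      simp [Complex.norm_real, abs_of_nonneg ((φ n).nonneg_normed v)]
      exact (φ n).nonneg_normed v
    rw [le_iff_lt_or_eq]; right
    rw [show (∫ v : V, ‖((ψ v : ℂ))‖) = ∫ v : V, ψ v from by simp_rw [this]]
    exact (φ n).integral_normed
  have hbd : ∀ ξ, ‖𝓕 h ξ‖ ≤ ‖𝓕 f ξ‖ := by
    intro ξ
    rw [hFh ξ, norm_mul]
    calc ‖𝓕 (fun x => (ψ x : ℂ)) ξ‖ * ‖𝓕 f ξ‖ ≤ 1 * ‖𝓕 f ξ‖ :=
          mul_le_mul_of_nonneg_right (hFψ ξ) (norm_nonneg _)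
      _ = ‖𝓕 f ξ‖ := one_mul _
  have hFhcont : Continuous (𝓕 h) :=
    VectorFourier.fourierIntegral_continuous Real.continuous_fourierChar
      (by exact continuous_inner) hhint
  have hFhint : Integrable (𝓕 h) :=
    h'f.norm.mono' hFhcont.aestronglyMeasurable (Filter.Eventually.of_forall fun ξ => by
      simpa using hbd ξ)
  have hinv : h x = 𝓕⁻ (𝓕 h) x := (hhint.fourierInv_fourier_eq hFhint hcont.continuousAt).symm
  calc ‖h x‖ = ‖𝓕⁻ (𝓕 h) x‖ := by rw [← hinv]
    _ ≤ ∫ ξ : V, ‖𝓕 h ξ‖ :=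
        VectorFourier.norm_fourierIntegral_le_integral_norm 𝐞 volume (-innerₗ V) _ x
    _ ≤ ∫ ξ : V, ‖𝓕 f ξ‖ :=
        integral_mono_of_nonneg (Filter.Eventually.of_forall fun ξ => norm_nonneg _)
          h'f.norm (Filter.Eventually.of_forall hbd)


end GeneralFourier


section Embedding

/-- The Japanese-bracket weight integral. -/
def Cs (s : ℝ) : ℝ≥0∞ := ∫⁻ ξ : E3, ENNReal.ofReal ((1 + ‖ξ‖ ^ 2) ^ (-s))

lemma Cs_lt_top {s : ℝ} (hs : 3/2 < s) : Cs s < ⊤ := by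
  have hs0 : (0:ℝ) ≤ s := by linarith
  have hint : Integrable (fun x : E3 => (1 + ‖x‖) ^ (-(2*s))) := by
    apply integrable_one_add_norm (E := E3)
    rw [finrank_euclideanSpace_fin]
    norm_num
    linarith
  have hptw : ∀ ξ : E3, ENNReal.ofReal ((1 + ‖ξ‖ ^ 2) ^ (-s))
      ≤ ENNReal.ofReal ((2:ℝ) ^ s * (1 + ‖ξ‖) ^ (-(2*s))) := by
    intro ξ
    apply ENNReal.ofReal_le_ofReal
    set a := ‖ξ‖ with ha
    have ha0 : 0 ≤ a := norm_nonneg _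
    have h1 : (0:ℝ) < 1 + a ^ 2 := by positivity
    have h2 : (0:ℝ) < 1 + a := by positivity
    have key : (1 + a) ^ (-(2*s)) = ((1 + a) ^ (2:ℝ)) ^ (-s) := by
      rw [← Real.rpow_mul h2.le]
      ring_nf
    rw [key]
    have hbase : (1 + a) ^ (2:ℝ) ≤ 2 * (1 + a ^ 2) := by
      rw [Real.rpow_two]
      nlinarith [sq_nonneg (1 - a)]
    have hmono : (2 * (1 + a ^ 2)) ^ (-s) ≤ ((1 + a) ^ (2:ℝ)) ^ (-s) :=
      Real.rpow_le_rpow_of_nonpos (by positivity) hbase (by linarith)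
    have hsplit : (2 * (1 + a ^ 2)) ^ (-s) = (2:ℝ) ^ (-s) * (1 + a ^ 2) ^ (-s) :=
      Real.mul_rpow (by norm_num) h1.le
    calc (1 + a ^ 2) ^ (-s) = (2:ℝ) ^ s * ((2:ℝ) ^ (-s) * (1 + a ^ 2) ^ (-s)) := by
          rw [← mul_assoc, ← Real.rpow_add (by norm_num : (0:ℝ) < 2)]
          simp
      _ = (2:ℝ) ^ s * (2 * (1 + a ^ 2)) ^ (-s) := by rw [hsplit]
      _ ≤ (2:ℝ) ^ s * ((1 + a) ^ (2:ℝ)) ^ (-s) := by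
          apply mul_le_mul_of_nonneg_left hmono (by positivity)
  calc Cs s ≤ ∫⁻ ξ : E3, ENNReal.ofReal ((2:ℝ) ^ s * (1 + ‖ξ‖) ^ (-(2*s))) :=
        lintegral_mono hptw
    _ = ENNReal.ofReal ((2:ℝ) ^ s) * ∫⁻ ξ : E3, ENNReal.ofReal ((1 + ‖ξ‖) ^ (-(2*s))) := by
        simp_rw [ENNReal.ofReal_mul (by positivity : (0:ℝ) ≤ (2:ℝ) ^ s)]
        rw [lintegral_const_mul' _ _ ENNReal.ofReal_ne_top]
    _ < ⊤ := by
        apply ENNReal.mul_lt_top ENNReal.ofReal_lt_top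
        have h2 := hint.hasFiniteIntegral
        rw [hasFiniteIntegral_iff_norm] at h2
        have heq : ∀ ξ : E3, ENNReal.ofReal ((1 + ‖ξ‖) ^ (-(2*s)))
            = ENNReal.ofReal ‖(1 + ‖ξ‖) ^ (-(2*s))‖ := fun ξ => by
          rw [Real.norm_of_nonneg (by positivity)]
        simp_rw [heq]
        exact h2

lemma lintegral_fourier_le (s : ℝ) (f : E3 → ℂ) (hf : Integrable f) :
    ∫⁻ ξ : E3, (‖𝓕 f ξ‖₊ : ℝ≥0∞)
      ≤ (Cs s) ^ ((1:ℝ)/2) * (HsNormSq s f) ^ ((1:ℝ)/2) := by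
  have h𝓕 : Continuous (𝓕 f) :=
    VectorFourier.fourierIntegral_continuous Real.continuous_fourierChar
      (by exact continuous_inner) hf
  set G : E3 → ℝ≥0∞ := fun ξ => ENNReal.ofReal ((1 + ‖ξ‖ ^ 2) ^ (-(s/2))) with hG
  set H : E3 → ℝ≥0∞ := fun ξ =>
    ENNReal.ofReal ((1 + ‖ξ‖ ^ 2) ^ (s/2)) * (‖𝓕 f ξ‖₊ : ℝ≥0∞) with hH
  have hpos : ∀ ξ : E3, (0:ℝ) < 1 + ‖ξ‖ ^ 2 := fun ξ => by positivity
  have hGH : ∀ ξ, (‖𝓕 f ξ‖₊ : ℝ≥0∞) = G ξ * H ξ := by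
    intro ξ
    rw [hG, hH, ← mul_assoc, ← ENNReal.ofReal_mul (Real.rpow_nonneg (hpos ξ).le _),
      ← Real.rpow_add (hpos ξ)]
    norm_num
  have hGm : AEMeasurable G := by
    apply Measurable.aemeasurable
    apply ENNReal.measurable_ofReal.comp
    fun_prop
  have hHm : AEMeasurable H := by
    refine AEMeasurable.mul (f := fun ξ => ENNReal.ofReal ((1 + ‖ξ‖ ^ 2) ^ (s/2)))
      (g := fun ξ => (‖𝓕 f ξ‖₊ : ℝ≥0∞)) ?_ ?_
    · apply Measurable.aemeasurable
      apply ENNReal.measurable_ofReal.comp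
      fun_prop
    · exact (measurable_coe_nnreal_ennreal.comp h𝓕.measurable.nnnorm).aemeasurable
  have hconj : Real.HolderConjugate 2 2 := Real.HolderConjugate.two_two
  have holder := ENNReal.lintegral_mul_le_Lp_mul_Lq volume hconj hGm hHm
  have hGsq : ∀ ξ, G ξ ^ (2:ℝ) = ENNReal.ofReal ((1 + ‖ξ‖ ^ 2) ^ (-s)) := by
    intro ξ
    rw [hG, ENNReal.ofReal_rpow_of_nonneg (Real.rpow_nonneg (hpos ξ).le _) (by norm_num),
      ← Real.rpow_mul (hpos ξ).le]
    congr 1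
    congr 1
    ring
  have hHsq : ∀ ξ, H ξ ^ (2:ℝ)
      = ENNReal.ofReal ((1 + ‖ξ‖ ^ 2) ^ s) * (‖𝓕 f ξ‖₊ : ℝ≥0∞) ^ 2 := by
    intro ξ
    rw [hH, ENNReal.mul_rpow_of_nonneg _ _ (by norm_num),
      ENNReal.ofReal_rpow_of_nonneg (Real.rpow_nonneg (hpos ξ).le _) (by norm_num),
      ← Real.rpow_mul (hpos ξ).le,
      show (2:ℝ) = ((2:ℕ):ℝ) by norm_num, ENNReal.rpow_natCast]
    congr 2
    ring
  calc ∫⁻ ξ : E3, (‖𝓕 f ξ‖₊ : ℝ≥0∞) = ∫⁻ ξ : E3, G ξ * H ξ := by simp_rw [hGH]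
    _ ≤ (∫⁻ ξ : E3, G ξ ^ (2:ℝ)) ^ ((1:ℝ)/2) * (∫⁻ ξ : E3, H ξ ^ (2:ℝ)) ^ ((1:ℝ)/2) := by
        simpa using holder
    _ = (Cs s) ^ ((1:ℝ)/2) * (HsNormSq s f) ^ ((1:ℝ)/2) := by
        congr 1
        · congr 1
          simp_rw [hGsq]
          rfl
        · congr 1
          simp_rw [hHsq]
          rfl

end Embedding


section AEBound

/-- Scaled localized piece, as a complex function. -/
def Fpiece (P : DyadicPartition) (w : E3 → ℝ) (j : ℕ) : E3 → ℂ := fun y : E3 =>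
  ((P.ψ j (((2:ℝ) ^ (j:ℕ)) • y) * w (((2:ℝ) ^ (j:ℕ)) • y) : ℝ) : ℂ)

lemma Fpiece_integrable (P : DyadicPartition) {w : E3 → ℝ} (hw : LocallyIntegrable w volume)
    (j : ℕ) : Integrable (Fpiece P w j) := by
  have hg : Integrable (fun x : E3 => P.ψ j x * w x) := by
    have := hw.integrable_smul_left_of_hasCompactSupport
      ((P.smooth j).continuous) (P.compSupp j)
    simpa [smul_eq_mul] using this
  have hc : ((2:ℝ) ^ (j:ℕ)) ≠ 0 := by positivity
  have := (integrable_comp_smul_iff (volume : Measure E3)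
    (fun x : E3 => ((P.ψ j x * w x : ℝ) : ℂ)) hc).2 hg.ofReal
  exact this

lemma ae_psi_bound (P : DyadicPartition) (s δ : ℝ) (hs : 3/2 < s) (w : E3 → ℝ)
    (hw : MemH P s δ w) :
    ∀ᵐ x : E3, ∀ j : ℕ, |P.ψ j x * w x| ≤
      ((Cs s) ^ ((1:ℝ)/2) * (HsNormSq s (Fpiece P w j)) ^ ((1:ℝ)/2)).toReal := by
  rw [ae_all_iff]
  intro j
  set c : ℝ := (2:ℝ) ^ (j:ℕ) with hcdef
  have hc : c ≠ 0 := by positivity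
  set B : ℝ≥0∞ := (Cs s) ^ ((1:ℝ)/2) * (HsNormSq s (Fpiece P w j)) ^ ((1:ℝ)/2) with hBdef
  have hFi : Integrable (Fpiece P w j) := Fpiece_integrable P hw.1 j
  -- finiteness of the HsNormSq of the piece
  have hHfin : HsNormSq s (Fpiece P w j) ≠ ⊤ := by
    intro htop
    have hle : ENNReal.ofReal ((2:ℝ) ^ ((3 + 2*δ) * (j:ℝ))) * HsNormSq s (Fpiece P w j)
        ≤ HwNormSq P s δ w := by
      rw [HwNormSq]
      exact ENNReal.le_tsum j
    rw [htop, ENNReal.mul_top (by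
      simp only [ne_eq, ENNReal.ofReal_eq_zero, not_le]
      positivity)] at hle
    exact (lt_irrefl ⊤ (lt_of_le_of_lt (le_trans le_rfl hle) hw.2)).elim
  have hBfin : B ≠ ⊤ := by
    apply ENNReal.mul_ne_top
    · exact (ENNReal.rpow_lt_top_of_nonneg (by norm_num) (Cs_lt_top hs).ne).ne
    · exact (ENNReal.rpow_lt_top_of_nonneg (by norm_num) hHfin).ne
  have hlin : ∫⁻ ξ : E3, (‖𝓕 (Fpiece P w j) ξ‖₊ : ℝ≥0∞) ≤ B :=
    lintegral_fourier_le s (Fpiece P w j) hFi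
  have h𝓕c : Continuous (𝓕 (Fpiece P w j)) :=
    VectorFourier.fourierIntegral_continuous Real.continuous_fourierChar
      (by exact continuous_inner) hFi
  have h𝓕i : Integrable (𝓕 (Fpiece P w j)) := by
    refine ⟨h𝓕c.aestronglyMeasurable, ?_⟩
    rw [HasFiniteIntegral]
    exact lt_of_le_of_lt hlin (lt_of_le_of_ne le_top hBfin)
  have hae := ae_norm_le_integral_fourier (Fpiece P w j) hFi h𝓕i
  have hIB : (∫ ξ : E3, ‖𝓕 (Fpiece P w j) ξ‖) ≤ B.toReal := by
    have h1 : ENNReal.ofReal (∫ ξ : E3, ‖𝓕 (Fpiece P w j) ξ‖)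
        = ∫⁻ ξ : E3, (‖𝓕 (Fpiece P w j) ξ‖₊ : ℝ≥0∞) :=
      ofReal_integral_norm_eq_lintegral_enorm h𝓕i
    have h2 : ENNReal.ofReal (∫ ξ : E3, ‖𝓕 (Fpiece P w j) ξ‖) ≤ B := by rw [h1]; exact hlin
    calc (∫ ξ : E3, ‖𝓕 (Fpiece P w j) ξ‖)
        = (ENNReal.ofReal (∫ ξ : E3, ‖𝓕 (Fpiece P w j) ξ‖)).toReal := by
          rw [ENNReal.toReal_ofReal (integral_nonneg fun ξ => norm_nonneg _)]
      _ ≤ B.toReal := ENNReal.toReal_mono hBfin h2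
  have haeB : ∀ᵐ y : E3, ‖Fpiece P w j y‖ ≤ B.toReal := by
    filter_upwards [hae] with y hy using hy.trans hIB
  -- transfer along the scaling x ↦ c⁻¹ • x
  have htrans : ∀ᵐ x : E3, ‖Fpiece P w j (c⁻¹ • x)‖ ≤ B.toReal := by
    rw [ae_iff] at haeB ⊢
    have hset : {x : E3 | ¬ ‖Fpiece P w j (c⁻¹ • x)‖ ≤ B.toReal}
        = (fun x : E3 => c⁻¹ • x) ⁻¹' {y : E3 | ¬ ‖Fpiece P w j y‖ ≤ B.toReal} := rfl
    rw [hset]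
    rw [Measure.addHaar_preimage_smul (volume : Measure E3) (inv_ne_zero hc)]
    rw [haeB, mul_zero]
  filter_upwards [htrans] with x hx
  have hxeq : Fpiece P w j (c⁻¹ • x) = ((P.ψ j x * w x : ℝ) : ℂ) := by
    rw [Fpiece]
    congr 2 <;> rw [← hcdef, smul_inv_smul₀ hc]
  rw [hxeq] at hx
  rw [abs_mul]
  simpa [Complex.norm_real, Real.norm_eq_abs, abs_mul] using hx

end AEBound


section Decay

lemma exists_good_j (P : DyadicPartition) (x : E3) :
    ∃ j : ℕ, P.ψ j x = 1 ∧ 1 + ‖x‖ ≤ (2:ℝ) ^ ((j:ℝ) + 1)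
      ∧ ‖x‖ ≤ (2:ℝ) ^ (j:ℕ) := by
  rcases le_or_gt (‖x‖) 1 with h1 | h1
  · refine ⟨0, P.one_zero x h1, ?_, by simpa using h1⟩
    rw [show ((0:ℕ):ℝ) + 1 = 1 by norm_num, Real.rpow_one]
    linarith
  · have hex : ∃ n : ℕ, ‖x‖ ≤ (2:ℝ) ^ n := by
      obtain ⟨n, hn⟩ := pow_unbounded_of_one_lt (‖x‖) (by norm_num : (1:ℝ) < 2)
      exact ⟨n, hn.le⟩
    classical
    set j := Nat.find hex with hjdef
    have hj : ‖x‖ ≤ (2:ℝ) ^ j := Nat.find_spec hex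
    have hj1 : 1 ≤ j := by
      rcases Nat.eq_zero_or_pos j with h0 | h0
      · exfalso; rw [h0] at hj; simp at hj; linarith
      · exact h0
    have hjmin : ¬ (‖x‖ ≤ (2:ℝ) ^ (j - 1)) := Nat.find_min hex (by omega)
    push_neg at hjmin
    have hcast : ((2:ℝ) ^ ((j:ℤ) - 1)) = (2:ℝ) ^ (j - 1 : ℕ) := by
      rw [show (j:ℤ) - 1 = ((j - 1 : ℕ) : ℤ) by omega, zpow_natCast]
    have hψ : P.ψ j x = 1 := by
      apply P.one_succ j hj1 x
      · rw [hcast]; exact hjmin.le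
      · rw [zpow_natCast]; exact hj
    refine ⟨j, hψ, ?_, hj⟩
    have h2j : (1:ℝ) ≤ (2:ℝ) ^ j := one_le_pow₀ (by norm_num : (1:ℝ) ≤ 2)
    have : (2:ℝ) ^ ((j:ℝ) + 1) = 2 * (2:ℝ) ^ j := by
      rw [Real.rpow_add (by norm_num), Real.rpow_one, Real.rpow_natCast, mul_comm]
    rw [this]
    linarith

lemma sqrt_piece_bound (P : DyadicPartition) {s δ : ℝ} (w : E3 → ℝ)
    (hw : MemH P s δ w) (j : ℕ) :
    (((Cs s) ^ ((1:ℝ)/2) * (HsNormSq s (Fpiece P w j)) ^ ((1:ℝ)/2)).toReal)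
      ≤ ((Cs s).toReal) ^ ((1:ℝ)/2) * ((2:ℝ) ^ (-((3:ℝ)/2 + δ) * (j:ℝ)) * Hnorm P s δ w) := by
  set Hj : ℝ≥0∞ := HsNormSq s (Fpiece P w j) with hHj
  have hle : ENNReal.ofReal ((2:ℝ) ^ ((3 + 2*δ) * (j:ℝ))) * Hj ≤ HwNormSq P s δ w := by
    rw [HwNormSq]; exact ENNReal.le_tsum j
  have hWfin : HwNormSq P s δ w ≠ ⊤ := hw.2.ne
  have hjpos : (0:ℝ) < (2:ℝ) ^ ((3 + 2*δ) * (j:ℝ)) := by positivity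
  have hHjfin : Hj ≠ ⊤ := by
    intro htop
    rw [htop, ENNReal.mul_top (by simp [ENNReal.ofReal_eq_zero]; positivity)] at hle
    exact hWfin (top_le_iff.mp hle)
  have hreal : (2:ℝ) ^ ((3 + 2*δ) * (j:ℝ)) * Hj.toReal ≤ (HwNormSq P s δ w).toReal := by
    have := ENNReal.toReal_mono hWfin hle
    rwa [ENNReal.toReal_mul, ENNReal.toReal_ofReal hjpos.le] at this
  have hHjR : Hj.toReal ≤ (2:ℝ) ^ (-(3 + 2*δ) * (j:ℝ)) * (HwNormSq P s δ w).toReal := by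
    rw [neg_mul, Real.rpow_neg (by norm_num)]
    rw [inv_mul_eq_div, le_div_iff₀ hjpos]
    linarith [hreal]
  rw [ENNReal.toReal_mul, ← ENNReal.toReal_rpow, ← ENNReal.toReal_rpow]
  apply mul_le_mul_of_nonneg_left _ (Real.rpow_nonneg ENNReal.toReal_nonneg _)
  calc Hj.toReal ^ ((1:ℝ)/2)
      ≤ ((2:ℝ) ^ (-(3 + 2*δ) * (j:ℝ)) * (HwNormSq P s δ w).toReal) ^ ((1:ℝ)/2) :=
        Real.rpow_le_rpow ENNReal.toReal_nonneg hHjR (by norm_num)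
    _ = ((2:ℝ) ^ (-(3 + 2*δ) * (j:ℝ))) ^ ((1:ℝ)/2) * ((HwNormSq P s δ w).toReal) ^ ((1:ℝ)/2) :=
        Real.mul_rpow (by positivity) ENNReal.toReal_nonneg
    _ = (2:ℝ) ^ (-((3:ℝ)/2 + δ) * (j:ℝ)) * Hnorm P s δ w := by
        congr 1
        · rw [← Real.rpow_mul (by norm_num : (0:ℝ) ≤ 2)]
          congr 1
          ring
        · rw [Hnorm, Real.sqrt_eq_rpow]

lemma decay_bound (P : DyadicPartition) {s δ : ℝ} (hs : 3/2 < s) (w : E3 → ℝ)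
    (hw : MemH P s δ w) :
    ∀ᵐ x : E3, ∀ j : ℕ, |P.ψ j x * w x| ≤
      ((Cs s).toReal) ^ ((1:ℝ)/2) * ((2:ℝ) ^ (-((3:ℝ)/2 + δ) * (j:ℝ)) * Hnorm P s δ w) := by
  filter_upwards [ae_psi_bound P s δ hs w hw] with x hx j
  exact (hx j).trans (sqrt_piece_bound P w hw j)

lemma embedding_bound (P : DyadicPartition) {s δ : ℝ} (hs : 3/2 < s)
    (hκ : 0 < (3:ℝ)/2 + δ) (w : E3 → ℝ) (hw : MemH P s δ w) :
    ∀ᵐ x : E3, (1 + ‖x‖) ^ ((3:ℝ)/2 + δ) * |w x| ≤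
      ((2:ℝ) ^ ((3:ℝ)/2 + δ) * ((Cs s).toReal) ^ ((1:ℝ)/2)) * Hnorm P s δ w := by
  filter_upwards [decay_bound P hs w hw] with x hx
  obtain ⟨j, hψ1, hxle, _⟩ := exists_good_j P x
  have h1 : |w x| ≤ ((Cs s).toReal) ^ ((1:ℝ)/2) *
      ((2:ℝ) ^ (-((3:ℝ)/2 + δ) * (j:ℝ)) * Hnorm P s δ w) := by
    have := hx j
    rwa [hψ1, one_mul] at this
  have hx0 : (0:ℝ) < 1 + ‖x‖ := by positivity
  have h2 : (1 + ‖x‖) ^ ((3:ℝ)/2 + δ) ≤ ((2:ℝ) ^ ((j:ℝ) + 1)) ^ ((3:ℝ)/2 + δ) :=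
    Real.rpow_le_rpow hx0.le hxle hκ.le
  calc (1 + ‖x‖) ^ ((3:ℝ)/2 + δ) * |w x|
      ≤ ((2:ℝ) ^ ((j:ℝ) + 1)) ^ ((3:ℝ)/2 + δ) *
        (((Cs s).toReal) ^ ((1:ℝ)/2) *
          ((2:ℝ) ^ (-((3:ℝ)/2 + δ) * (j:ℝ)) * Hnorm P s δ w)) :=
        mul_le_mul h2 h1 (abs_nonneg _) (by positivity)
    _ = ((2:ℝ) ^ ((3:ℝ)/2 + δ) * ((Cs s).toReal) ^ ((1:ℝ)/2)) * Hnorm P s δ w := by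
        rw [← Real.rpow_mul (by norm_num : (0:ℝ) ≤ 2)]
        have hcomb : (2:ℝ) ^ (((j:ℝ) + 1) * ((3:ℝ)/2 + δ)) * (2:ℝ) ^ (-((3:ℝ)/2 + δ) * (j:ℝ))
            = (2:ℝ) ^ ((3:ℝ)/2 + δ) := by
          rw [← Real.rpow_add (by norm_num : (0:ℝ) < 2)]
          congr 1
          ring
        linear_combination ((Cs s).toReal ^ ((1:ℝ)/2) * Hnorm P s δ w) * hcomb

end Decay


section Finiteness

/-- Dyadic annuli partitioning `ℝ³`. -/
def Ann : ℕ → Set E3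
  | 0 => {x : E3 | ‖x‖ ≤ 1}
  | (j+1) => {x : E3 | (2:ℝ) ^ j < ‖x‖ ∧ ‖x‖ ≤ (2:ℝ) ^ (j+1)}

lemma Ann_measurable (j : ℕ) : MeasurableSet (Ann j) := by
  cases j with
  | zero =>
      exact measurableSet_le (continuous_norm.measurable) measurable_const
  | succ j =>
      exact (measurableSet_lt measurable_const continuous_norm.measurable).inter
        (measurableSet_le continuous_norm.measurable measurable_const)

lemma Ann_ub (j : ℕ) {x : E3} (hx : x ∈ Ann j) : ‖x‖ ≤ (2:ℝ) ^ j := by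
  cases j with
  | zero => simpa [Ann] using hx
  | succ j => exact hx.2

lemma Ann_disjoint : Pairwise (Function.onFun Disjoint Ann) := by
  rw [pairwise_disjoint_on]
  intro i j hij
  rw [Set.disjoint_left]
  intro x hxi hxj
  obtain ⟨m, rfl⟩ : ∃ m, j = m + 1 := ⟨j - 1, by omega⟩
  have h1 : ‖x‖ ≤ (2:ℝ) ^ i := Ann_ub i hxi
  have h2 : (2:ℝ) ^ m < ‖x‖ := hxj.1
  have h3 : (2:ℝ) ^ i ≤ (2:ℝ) ^ m := pow_le_pow_right₀ (by norm_num) (by omega)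
  linarith

lemma Ann_cover : (⋃ j, Ann j) = Set.univ := by
  rw [Set.eq_univ_iff_forall]
  intro x
  rcases le_or_gt (‖x‖) 1 with h1 | h1
  · exact Set.mem_iUnion.2 ⟨0, h1⟩
  · have hex : ∃ n : ℕ, ‖x‖ ≤ (2:ℝ) ^ n := by
      obtain ⟨n, hn⟩ := pow_unbounded_of_one_lt (‖x‖) (by norm_num : (1:ℝ) < 2)
      exact ⟨n, hn.le⟩
    classical
    set n := Nat.find hex with hndef
    clear_value n
    have hn : ‖x‖ ≤ (2:ℝ) ^ n := hndef ▸ Nat.find_spec hex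
    have hn1 : 1 ≤ n := by
      rcases Nat.eq_zero_or_pos n with h0 | h0
      · exfalso; rw [h0] at hn; simp at hn; linarith
      · exact h0
    have hnmin : ¬ (‖x‖ ≤ (2:ℝ) ^ (n - 1)) := hndef ▸ Nat.find_min hex (by
      rw [← hndef]; omega)
    push_neg at hnmin
    refine Set.mem_iUnion.2 ⟨n, ?_⟩
    obtain ⟨m, rfl⟩ : ∃ m, n = m + 1 := ⟨n - 1, by omega⟩
    exact ⟨by simpa using hnmin, hn⟩

lemma Ann_psi_one (P : DyadicPartition) (j : ℕ) {x : E3} (hx : x ∈ Ann j) :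
    P.ψ j x = 1 := by
  cases j with
  | zero => exact P.one_zero x hx
  | succ j =>
      apply P.one_succ (j+1) (by omega) x
      · rw [show ((j+1:ℕ):ℤ) - 1 = ((j:ℕ):ℤ) by omega, zpow_natCast]
        exact hx.1.le
      · rw [zpow_natCast]
        exact hx.2

lemma Ann_weight_bound {δ : ℝ} (j : ℕ) {x : E3} (hx : x ∈ Ann j) :
    (1 + ‖x‖) ^ (2 * δ) ≤ (2:ℝ) ^ (4 * |δ|) * (2:ℝ) ^ (2 * δ * (j:ℝ)) := by
  have hx0 : (0:ℝ) ≤ ‖x‖ := norm_nonneg x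
  have hlow : (2:ℝ) ^ ((j:ℝ) - 1) ≤ 1 + ‖x‖ := by
    cases j with
    | zero =>
        simp only [Nat.cast_zero, zero_sub]
        rw [Real.rpow_neg (by norm_num), Real.rpow_one]
        norm_num
        linarith
    | succ j =>
        have := hx.1
        have h2 : (2:ℝ) ^ ((j:ℝ) + 1 - 1) = (2:ℝ) ^ (j:ℕ) := by
          rw [show (j:ℝ) + 1 - 1 = ((j:ℕ):ℝ) by ring, Real.rpow_natCast]
        rw [show (((j+1:ℕ)):ℝ) - 1 = (j:ℝ) + 1 - 1 by push_cast; ring, h2]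
        linarith
  have hup : 1 + ‖x‖ ≤ (2:ℝ) ^ ((j:ℝ) + 2) := by
    cases j with
    | zero =>
        have hx1 : ‖x‖ ≤ 1 := hx
        rw [show ((0:ℕ):ℝ) + 2 = 2 by norm_num]
        rw [show (2:ℝ) ^ (2:ℝ) = 4 by
          rw [show (2:ℝ) = ((2:ℕ):ℝ) by norm_num, Real.rpow_natCast]; norm_num]
        linarith
    | succ j =>
        have hx2 : ‖x‖ ≤ (2:ℝ) ^ (j+1 : ℕ) := hx.2
        have h2 : (1:ℝ) ≤ (2:ℝ) ^ (j+1:ℕ) := one_le_pow₀ (by norm_num : (1:ℝ) ≤ 2)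
        rw [show ((j+1:ℕ):ℝ) + 2 = (((j+1:ℕ)):ℝ) + 1 + 1 by ring]
        rw [Real.rpow_add (by norm_num : (0:ℝ) < 2), Real.rpow_add (by norm_num : (0:ℝ) < 2),
          Real.rpow_one, Real.rpow_natCast]
        nlinarith [pow_pos (by norm_num : (0:ℝ) < 2) (j+1)]
  have hposl : (0:ℝ) < (2:ℝ) ^ ((j:ℝ) - 1) := by positivity
  rcases le_or_gt 0 δ with hδ | hδ
  · have h1 : (1 + ‖x‖) ^ (2*δ) ≤ ((2:ℝ) ^ ((j:ℝ) + 2)) ^ (2*δ) :=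
      Real.rpow_le_rpow (by linarith) hup (by linarith)
    calc (1 + ‖x‖) ^ (2*δ) ≤ ((2:ℝ) ^ ((j:ℝ) + 2)) ^ (2*δ) := h1
      _ = (2:ℝ) ^ (((j:ℝ) + 2) * (2*δ)) := by
          rw [← Real.rpow_mul (by norm_num : (0:ℝ) ≤ 2)]
      _ ≤ (2:ℝ) ^ (4 * |δ|) * (2:ℝ) ^ (2 * δ * (j:ℝ)) := by
          rw [← Real.rpow_add (by norm_num : (0:ℝ) < 2)]
          apply Real.rpow_le_rpow_of_exponent_le (by norm_num)
          rw [abs_of_nonneg hδ]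
          nlinarith
  · have h1 : (1 + ‖x‖) ^ (2*δ) ≤ ((2:ℝ) ^ ((j:ℝ) - 1)) ^ (2*δ) :=
      Real.rpow_le_rpow_of_nonpos hposl hlow (by linarith)
    calc (1 + ‖x‖) ^ (2*δ) ≤ ((2:ℝ) ^ ((j:ℝ) - 1)) ^ (2*δ) := h1
      _ = (2:ℝ) ^ (((j:ℝ) - 1) * (2*δ)) := by
          rw [← Real.rpow_mul (by norm_num : (0:ℝ) ≤ 2)]
      _ ≤ (2:ℝ) ^ (4 * |δ|) * (2:ℝ) ^ (2 * δ * (j:ℝ)) := by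
          rw [← Real.rpow_add (by norm_num : (0:ℝ) < 2)]
          apply Real.rpow_le_rpow_of_exponent_le (by norm_num)
          rw [abs_of_neg hδ]
          nlinarith

lemma memL2_of_memH (P : DyadicPartition) {s δ : ℝ} (hs : 3/2 < s) (w : E3 → ℝ)
    (hw : MemH P s δ w) : L2wNormSq δ w < ⊤ := by
  classical
  set Hj : ℕ → ℝ≥0∞ := fun j => HsNormSq s (Fpiece P w j) with hHjdef
  set V1 : ℝ≥0∞ := volume (Metric.ball (0:E3) 1) with hV1def
  have hV1fin : V1 ≠ ⊤ := (measure_ball_lt_top).ne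
  set K0 : ℝ≥0∞ := ENNReal.ofReal ((2:ℝ) ^ (4 * |δ|)) * Cs s * V1 with hK0def
  have hK0fin : K0 ≠ ⊤ :=
    ENNReal.mul_ne_top (ENNReal.mul_ne_top ENNReal.ofReal_ne_top (Cs_lt_top hs).ne) hV1fin
  -- squared sup bound on each piece
  have hBsq : ∀ j : ℕ,
      (Cs s ^ ((1:ℝ)/2) * Hj j ^ ((1:ℝ)/2)) ^ (2:ℕ) = Cs s * Hj j := by
    intro j
    rw [mul_pow, ← ENNReal.rpow_natCast (Cs s ^ ((1:ℝ)/2)) 2,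
      ← ENNReal.rpow_natCast (Hj j ^ ((1:ℝ)/2)) 2, ← ENNReal.rpow_mul, ← ENNReal.rpow_mul]
    norm_num
  -- split the integral over the annuli
  have hsplit : L2wNormSq δ w = ∑' j : ℕ, ∫⁻ x in Ann j,
      ENNReal.ofReal ((1 + ‖x‖) ^ (2 * δ)) * (‖w x‖₊ : ℝ≥0∞) ^ 2 := by
    rw [L2wNormSq, ← setLIntegral_univ, ← Ann_cover,
      lintegral_iUnion Ann_measurable Ann_disjoint]
  rw [hsplit]
  -- bound each annulus integral
  have hann : ∀ j : ℕ, (∫⁻ x in Ann j,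
      ENNReal.ofReal ((1 + ‖x‖) ^ (2 * δ)) * (‖w x‖₊ : ℝ≥0∞) ^ 2)
      ≤ K0 * (ENNReal.ofReal ((2:ℝ) ^ ((3 + 2*δ) * (j:ℝ))) * Hj j) := by
    intro j
    set cj : ℝ≥0∞ := ENNReal.ofReal ((2:ℝ) ^ (4 * |δ|) * (2:ℝ) ^ (2 * δ * (j:ℝ)))
      * (Cs s * Hj j) with hcjdef
    have hae : ∀ᵐ x ∂(volume.restrict (Ann j)),
        ENNReal.ofReal ((1 + ‖x‖) ^ (2 * δ)) * (‖w x‖₊ : ℝ≥0∞) ^ 2 ≤ cj := by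
      rw [ae_restrict_iff' (Ann_measurable j)]
      filter_upwards [ae_psi_bound P s δ hs w hw] with x hx hmem
      have hw1 : (‖w x‖₊ : ℝ≥0∞) ≤ Cs s ^ ((1:ℝ)/2) * Hj j ^ ((1:ℝ)/2) := by
        have h1 : |w x| ≤ ((Cs s) ^ ((1:ℝ)/2) * (Hj j) ^ ((1:ℝ)/2)).toReal := by
          have := hx j
          rwa [Ann_psi_one P j hmem, one_mul] at this
        calc (‖w x‖₊ : ℝ≥0∞) = ENNReal.ofReal |w x| := Real.enorm_eq_ofReal_abs _
          _ ≤ ENNReal.ofReal (((Cs s) ^ ((1:ℝ)/2) * (Hj j) ^ ((1:ℝ)/2)).toReal) :=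
              ENNReal.ofReal_le_ofReal h1
          _ ≤ Cs s ^ ((1:ℝ)/2) * Hj j ^ ((1:ℝ)/2) := ENNReal.ofReal_toReal_le
      have hw2 : (‖w x‖₊ : ℝ≥0∞) ^ 2 ≤ Cs s * Hj j := by
        calc (‖w x‖₊ : ℝ≥0∞) ^ 2 ≤ (Cs s ^ ((1:ℝ)/2) * Hj j ^ ((1:ℝ)/2)) ^ (2:ℕ) :=
              pow_le_pow_left' hw1 2
          _ = Cs s * Hj j := hBsq j
      have hwt : ENNReal.ofReal ((1 + ‖x‖) ^ (2 * δ))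
          ≤ ENNReal.ofReal ((2:ℝ) ^ (4 * |δ|) * (2:ℝ) ^ (2 * δ * (j:ℝ))) :=
        ENNReal.ofReal_le_ofReal (Ann_weight_bound j hmem)
      rw [hcjdef]
      exact mul_le_mul' hwt hw2
    have hvol : volume (Ann j) ≤ ENNReal.ofReal (((2:ℝ) ^ (j:ℕ)) ^ (3:ℕ)) * V1 := by
      have hsub : Ann j ⊆ Metric.closedBall (0:E3) ((2:ℝ) ^ (j:ℕ)) := by
        intro x hx
        rw [Metric.mem_closedBall, dist_zero_right]
        exact Ann_ub j hx
      calc volume (Ann j) ≤ volume (Metric.closedBall (0:E3) ((2:ℝ) ^ (j:ℕ))) :=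
            measure_mono hsub
        _ = ENNReal.ofReal (((2:ℝ) ^ (j:ℕ)) ^ (3:ℕ)) * V1 := by
            rw [Measure.addHaar_closedBall _ _ (by positivity : (0:ℝ) ≤ (2:ℝ) ^ (j:ℕ)),
              finrank_euclideanSpace_fin]
    calc (∫⁻ x in Ann j, ENNReal.ofReal ((1 + ‖x‖) ^ (2 * δ)) * (‖w x‖₊ : ℝ≥0∞) ^ 2)
        ≤ ∫⁻ _x in Ann j, cj := lintegral_mono_ae hae
      _ = cj * volume (Ann j) := by rw [setLIntegral_const]
      _ ≤ cj * (ENNReal.ofReal (((2:ℝ) ^ (j:ℕ)) ^ (3:ℕ)) * V1) :=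
          mul_le_mul_right hvol _
      _ = K0 * (ENNReal.ofReal ((2:ℝ) ^ ((3 + 2*δ) * (j:ℝ))) * Hj j) := by
          rw [hcjdef, hK0def]
          have hexp : (2:ℝ) ^ (2 * δ * (j:ℝ)) * (((2:ℝ) ^ (j:ℕ)) ^ (3:ℕ))
              = (2:ℝ) ^ ((3 + 2*δ) * (j:ℝ)) := by
            rw [← pow_mul, ← Real.rpow_natCast (2:ℝ) (j * 3),
              ← Real.rpow_add (by norm_num : (0:ℝ) < 2)]
            congr 1
            push_cast
            ring
          have h2 : ENNReal.ofReal ((2:ℝ) ^ (2 * δ * (j:ℝ)))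
              * ENNReal.ofReal (((2:ℝ) ^ (j:ℕ)) ^ (3:ℕ))
              = ENNReal.ofReal ((2:ℝ) ^ ((3 + 2*δ) * (j:ℝ))) := by
            rw [← ENNReal.ofReal_mul (by positivity), hexp]
          rw [ENNReal.ofReal_mul (by positivity : (0:ℝ) ≤ (2:ℝ) ^ (4 * |δ|)), ← h2]
          ring
  calc (∑' j : ℕ, ∫⁻ x in Ann j,
        ENNReal.ofReal ((1 + ‖x‖) ^ (2 * δ)) * (‖w x‖₊ : ℝ≥0∞) ^ 2)
      ≤ ∑' j : ℕ, K0 * (ENNReal.ofReal ((2:ℝ) ^ ((3 + 2*δ) * (j:ℝ))) * Hj j) :=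
        ENNReal.tsum_le_tsum hann
    _ = K0 * HwNormSq P s δ w := by rw [ENNReal.tsum_mul_left]; rfl
    _ < ⊤ := ENNReal.mul_lt_top (lt_of_le_of_ne le_top hK0fin) hw.2

end Finiteness


section PowerDiff

lemma rpow_sub_rpow_le {β : ℝ} (hβ : 2 ≤ β) {a b : ℝ} (hb : 0 ≤ b) (hba : b ≤ a) :
    a ^ β - b ^ β ≤ β * (a ^ (β-1) + b ^ (β-1)) * (a - b) := by
  have ha : 0 ≤ a := hb.trans hba
  rcases eq_or_lt_of_le hba with heq | hlt
  · subst heq; simp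
  · have hmvt := exists_hasDerivAt_eq_slope (fun t : ℝ => t ^ β)
      (fun t : ℝ => β * t ^ (β - 1)) hlt
      (fun x _hx => (Real.hasDerivAt_rpow_const (p := β)
        (Or.inr (by linarith))).continuousAt.continuousWithinAt)
      (fun x _hx => Real.hasDerivAt_rpow_const (p := β) (Or.inr (by linarith)))
    obtain ⟨c, hc, hceq⟩ := hmvt
    have hc0 : 0 ≤ c := le_of_lt (lt_of_le_of_lt hb hc.1)
    have hca : c ≤ a := hc.2.le
    have hslope : a ^ β - b ^ β = β * c ^ (β - 1) * (a - b) := by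
      have hab : a - b ≠ 0 := by intro h; linarith
      field_simp at hceq
      linarith [hceq]
    rw [hslope]
    have h1 : c ^ (β - 1) ≤ a ^ (β - 1) := Real.rpow_le_rpow hc0 hca (by linarith)
    have h2 : (0:ℝ) ≤ b ^ (β - 1) := Real.rpow_nonneg hb _
    have h3 : (0:ℝ) ≤ a - b := by linarith
    have h4 : 0 ≤ β * (a - b) := mul_nonneg (by linarith) h3
    nlinarith [mul_le_mul_of_nonneg_left h1 h4, mul_nonneg h4 h2]

lemma abs_rpow_sub_rpow_le {β : ℝ} (hβ : 2 ≤ β) {a b : ℝ} (ha : 0 ≤ a) (hb : 0 ≤ b) :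
    |a ^ β - b ^ β| ≤ β * (a ^ (β-1) + b ^ (β-1)) * |a - b| := by
  rcases le_total b a with h | h
  · have h1 : b ^ β ≤ a ^ β := Real.rpow_le_rpow hb h (by linarith)
    rw [abs_of_nonneg (by linarith), abs_of_nonneg (by linarith)]
    exact rpow_sub_rpow_le hβ hb h
  · have h1 : a ^ β ≤ b ^ β := Real.rpow_le_rpow ha h (by linarith)
    rw [abs_of_nonpos (by linarith), abs_of_nonpos (by linarith)]
    have := rpow_sub_rpow_le hβ ha h
    nlinarith
  
end PowerDiff


section Pointwise

lemma pointwise_key {β κ δ A M₁ M₂ u₁ u₂ : ℝ} (hβ : 2 ≤ β) (hA : 1 ≤ A)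
    (hu₁ : 0 ≤ u₁) (hu₂ : 0 ≤ u₂) (hM₁ : 0 ≤ M₁) (hM₂ : 0 ≤ M₂)
    (hκβ : 2 ≤ κ * (β - 1))
    (h₁ : u₁ ≤ M₁ * A ^ (-κ)) (h₂ : u₂ ≤ M₂ * A ^ (-κ)) :
    A ^ (2*(δ+2)) * (u₁ ^ β - u₂ ^ β) ^ 2
      ≤ (β * (M₁ ^ (β-1) + M₂ ^ (β-1))) ^ 2 * (A ^ (2*δ) * (u₁ - u₂) ^ 2) := by
  have hA0 : (0:ℝ) < A := by linarith
  set E : ℝ := A ^ (-κ * (β-1)) with hE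
  have hE0 : 0 ≤ E := Real.rpow_nonneg hA0.le _
  have hpow : ∀ M u : ℝ, 0 ≤ M → 0 ≤ u → u ≤ M * A ^ (-κ) →
      u ^ (β-1) ≤ M ^ (β-1) * E := by
    intro M u hM hu hle
    calc u ^ (β-1) ≤ (M * A ^ (-κ)) ^ (β-1) :=
          Real.rpow_le_rpow hu hle (by linarith)
      _ = M ^ (β-1) * E := by
          rw [Real.mul_rpow hM (Real.rpow_nonneg hA0.le _), hE,
            ← Real.rpow_mul hA0.le]
  have h1' := hpow M₁ u₁ hM₁ hu₁ h₁
  have h2' := hpow M₂ u₂ hM₂ hu₂ h₂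
  have hd : |u₁ ^ β - u₂ ^ β| ≤ β * (u₁ ^ (β-1) + u₂ ^ (β-1)) * |u₁ - u₂| :=
    abs_rpow_sub_rpow_le hβ hu₁ hu₂
  set T : ℝ := M₁ ^ (β-1) + M₂ ^ (β-1) with hT
  have hT0 : 0 ≤ T := add_nonneg (Real.rpow_nonneg hM₁ _) (Real.rpow_nonneg hM₂ _)
  have hd2 : |u₁ ^ β - u₂ ^ β| ≤ β * T * E * |u₁ - u₂| := by
    calc |u₁ ^ β - u₂ ^ β| ≤ β * (u₁ ^ (β-1) + u₂ ^ (β-1)) * |u₁ - u₂| := hd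
      _ ≤ β * (T * E) * |u₁ - u₂| := by
          apply mul_le_mul_of_nonneg_right _ (abs_nonneg _)
          apply mul_le_mul_of_nonneg_left _ (by linarith : (0:ℝ) ≤ β)
          calc u₁ ^ (β-1) + u₂ ^ (β-1) ≤ M₁ ^ (β-1) * E + M₂ ^ (β-1) * E :=
                add_le_add h1' h2'
            _ = T * E := by rw [hT]; ring
      _ = β * T * E * |u₁ - u₂| := by ring
  have hsq : (u₁ ^ β - u₂ ^ β) ^ 2 ≤ (β * T * E) ^ 2 * (u₁ - u₂) ^ 2 := by
    have h0 : 0 ≤ β * T * E := by positivity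
    have := mul_self_le_mul_self (abs_nonneg (u₁ ^ β - u₂ ^ β)) hd2
    calc (u₁ ^ β - u₂ ^ β) ^ 2 = |u₁ ^ β - u₂ ^ β| * |u₁ ^ β - u₂ ^ β| := by
          rw [sq, ← abs_mul_abs_self]
      _ ≤ (β * T * E * |u₁ - u₂|) * (β * T * E * |u₁ - u₂|) := this
      _ = (β * T * E) ^ 2 * (u₁ - u₂) ^ 2 := by
          rw [show (β * T * E * |u₁ - u₂|) * (β * T * E * |u₁ - u₂|)
            = (β * T * E) ^ 2 * (|u₁ - u₂| * |u₁ - u₂|) by ring, abs_mul_abs_self, ← sq]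
  have hwt : A ^ (2*(δ+2)) = A ^ (2*δ) * A ^ ((4:ℝ)) := by
    rw [← Real.rpow_add hA0]
    congr 1
    ring
  have hE2 : A ^ ((4:ℝ)) * E ^ 2 ≤ 1 := by
    rw [hE, ← Real.rpow_natCast (A ^ (-κ * (β-1))) 2, ← Real.rpow_mul hA0.le,
      ← Real.rpow_add hA0]
    apply Real.rpow_le_one_of_one_le_of_nonpos hA
    push_cast
    nlinarith
  have hw0 : 0 ≤ A ^ (2*δ) := Real.rpow_nonneg hA0.le _
  have h40 : 0 ≤ A ^ ((4:ℝ)) := Real.rpow_nonneg hA0.le _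
  calc A ^ (2*(δ+2)) * (u₁ ^ β - u₂ ^ β) ^ 2
      = A ^ (2*δ) * A ^ ((4:ℝ)) * (u₁ ^ β - u₂ ^ β) ^ 2 := by rw [hwt]
    _ ≤ A ^ (2*δ) * A ^ ((4:ℝ)) * ((β * T * E) ^ 2 * (u₁ - u₂) ^ 2) := by
        apply mul_le_mul_of_nonneg_left hsq (by positivity)
    _ = (β * T) ^ 2 * (A ^ (2*δ) * (u₁ - u₂) ^ 2) * (A ^ ((4:ℝ)) * E ^ 2) := by ring
    _ ≤ (β * T) ^ 2 * (A ^ (2*δ) * (u₁ - u₂) ^ 2) * 1 := by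
        apply mul_le_mul_of_nonneg_left hE2 (by positivity)
    _ = (β * T) ^ 2 * (A ^ (2*δ) * (u₁ - u₂) ^ 2) := by ring

lemma ennreal_repr (c v : ℝ) (hc : 0 ≤ c) :
    ENNReal.ofReal c * (‖v‖₊ : ℝ≥0∞) ^ 2 = ENNReal.ofReal (c * v ^ 2) := by
  rw [← enorm_eq_nnnorm, Real.enorm_eq_ofReal_abs, ← ENNReal.ofReal_pow (abs_nonneg _), sq_abs,
    ← ENNReal.ofReal_mul hc]

end Pointwise

/-- Nonlinear estimate for the difference of two powers.
Let `β ≥ 2` with `s, δ` as in the nonlinear power estimate. Then there is a constant `C`,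
independent of the functions, such that for all nonnegative `w₁, w₂ ∈ H_{s,δ}`,
`‖w₁^β - w₂^β‖_{L²_{δ+2}} ≤ C_d ‖w₁ - w₂‖_{L²_δ}` where
`C_d² ≤ C (β²/2)(‖w₁‖_{H_{s,δ}}^{2(β-1)} + ‖w₂‖_{H_{s,δ}}^{2(β-1)})`. -/
theorem power_difference_estimate (P : DyadicPartition) (s δ β : ℝ) (hβ : 2 ≤ β)
    (hint : β = (⌊β⌋ : ℝ) → 3/2 < s ∧ 2 / (β - 1) - 3/2 ≤ δ)
    (hfrac : β ≠ (⌊β⌋ : ℝ) →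
      (5/2 < s ∧ s < β - (⌊β⌋ : ℝ) + 5/2) ∧ 2 / ((⌊β⌋ : ℝ) - 1) - 3/2 ≤ δ) :
    ∃ C : ℝ, 0 < C ∧ ∀ w₁ w₂ : E3 → ℝ,
      MemH P s δ w₁ → MemH P s δ w₂ → (∀ x, 0 ≤ w₁ x) → (∀ x, 0 ≤ w₂ x) →
      ∃ Cd : ℝ, 0 ≤ Cd ∧
        Cd ^ 2 ≤ C * (β ^ 2 / 2) *
          (Hnorm P s δ w₁ ^ (2 * (β - 1)) + Hnorm P s δ w₂ ^ (2 * (β - 1))) ∧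
        L2wNorm (δ + 2) (fun x => w₁ x ^ β - w₂ x ^ β) ≤
          Cd * L2wNorm δ (fun x => w₁ x - w₂ x) := by
  have hβ1 : (1:ℝ) ≤ β - 1 := by linarith
  have hs32 : 3/2 < s := by
    by_cases hfl : β = (⌊β⌋ : ℝ)
    · exact (hint hfl).1
    · linarith [((hfrac hfl).1).1]
  have hm2 : β = (⌊β⌋ : ℝ) ∨ (2:ℝ) ≤ (⌊β⌋ : ℝ) := by
    by_cases hfl : β = (⌊β⌋ : ℝ)
    · exact Or.inl hfl
    · right
      have h2 : (2:ℤ) ≤ ⌊β⌋ := Int.le_floor.2 (by exact_mod_cast hβ)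
      exact_mod_cast h2
  have hκpos : 0 < (3:ℝ)/2 + δ := by
    by_cases hfl : β = (⌊β⌋ : ℝ)
    · have h := (hint hfl).2
      have h2 : 0 < 2 / (β - 1) := div_pos (by norm_num) (by linarith)
      linarith
    · have h := (hfrac hfl).2
      have hm : (2:ℝ) ≤ (⌊β⌋ : ℝ) := hm2.resolve_left hfl
      have h2 : 0 < 2 / ((⌊β⌋:ℝ) - 1) := div_pos (by norm_num) (by linarith)
      linarith
  have hκβ : 2 ≤ ((3:ℝ)/2 + δ) * (β - 1) := by
    by_cases hfl : β = (⌊β⌋ : ℝ)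
    · have h := (hint hfl).2
      have hb : (0:ℝ) < β - 1 := by linarith
      have h1 : 2 / (β - 1) ≤ 3/2 + δ := by linarith
      have h3 := mul_le_mul_of_nonneg_right h1 hb.le
      rwa [div_mul_cancel₀ _ hb.ne'] at h3
    · have h := (hfrac hfl).2
      have hm : (2:ℝ) ≤ (⌊β⌋ : ℝ) := hm2.resolve_left hfl
      have hmβ : (⌊β⌋ : ℝ) ≤ β := Int.floor_le β
      have hml : (0:ℝ) < (⌊β⌋:ℝ) - 1 := by linarith
      have h1 : 2 / ((⌊β⌋:ℝ) - 1) ≤ 3/2 + δ := by linarith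
      calc (2:ℝ) = 2 / ((⌊β⌋:ℝ) - 1) * ((⌊β⌋:ℝ) - 1) := by
            rw [div_mul_cancel₀ _ hml.ne']
        _ ≤ (3/2 + δ) * ((⌊β⌋:ℝ) - 1) :=
            mul_le_mul_of_nonneg_right h1 hml.le
        _ ≤ (3/2 + δ) * (β - 1) :=
            mul_le_mul_of_nonneg_left (by linarith) hκpos.le
  set K : ℝ := (2:ℝ) ^ ((3:ℝ)/2 + δ) * ((Cs s).toReal) ^ ((1:ℝ)/2) with hKdef
  have hK0 : 0 ≤ K := by
    apply mul_nonneg (Real.rpow_nonneg (by norm_num) _)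
      (Real.rpow_nonneg ENNReal.toReal_nonneg _)
  refine ⟨max 1 (4 * K ^ (2*(β-1))), lt_of_lt_of_le one_pos (le_max_left _ _), ?_⟩
  intro w₁ w₂ hw₁ hw₂ hp₁ hp₂
  have hN₁0 : 0 ≤ Hnorm P s δ w₁ := Real.sqrt_nonneg _
  have hN₂0 : 0 ≤ Hnorm P s δ w₂ := Real.sqrt_nonneg _
  set N₁ : ℝ := Hnorm P s δ w₁ with hN₁def
  set N₂ : ℝ := Hnorm P s δ w₂ with hN₂def
  set M₁ : ℝ := K * N₁ with hM₁def
  set M₂ : ℝ := K * N₂ with hM₂def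
  have hM₁0 : 0 ≤ M₁ := mul_nonneg hK0 hN₁0
  have hM₂0 : 0 ≤ M₂ := mul_nonneg hK0 hN₂0
  set Cd : ℝ := β * (M₁ ^ (β-1) + M₂ ^ (β-1)) with hCddef
  have hCd0 : 0 ≤ Cd :=
    mul_nonneg (by linarith) (add_nonneg (Real.rpow_nonneg hM₁0 _) (Real.rpow_nonneg hM₂0 _))
  refine ⟨Cd, hCd0, ?_, ?_⟩
  · -- the bound on Cd ^ 2
    have e1 : ∀ M : ℝ, 0 ≤ M → (M ^ (β-1)) ^ (2:ℕ) = M ^ (2*(β-1)) := by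
      intro M hM
      rw [← Real.rpow_natCast (M ^ (β-1)) 2, ← Real.rpow_mul hM]
      congr 1
      push_cast
      ring
    have e2 : M₁ ^ (2*(β-1)) = K ^ (2*(β-1)) * N₁ ^ (2*(β-1)) := Real.mul_rpow hK0 hN₁0
    have e3 : M₂ ^ (2*(β-1)) = K ^ (2*(β-1)) * N₂ ^ (2*(β-1)) := Real.mul_rpow hK0 hN₂0
    have hxy : (M₁ ^ (β-1) + M₂ ^ (β-1)) ^ 2
        ≤ 2 * (M₁ ^ (β-1)) ^ 2 + 2 * (M₂ ^ (β-1)) ^ 2 := by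
      nlinarith [sq_nonneg (M₁ ^ (β-1) - M₂ ^ (β-1))]
    have hsum0 : 0 ≤ N₁ ^ (2*(β-1)) + N₂ ^ (2*(β-1)) :=
      add_nonneg (Real.rpow_nonneg hN₁0 _) (Real.rpow_nonneg hN₂0 _)
    calc Cd ^ 2 = β ^ 2 * (M₁ ^ (β-1) + M₂ ^ (β-1)) ^ 2 := by rw [hCddef]; ring
      _ ≤ β ^ 2 * (2 * (M₁ ^ (β-1)) ^ 2 + 2 * (M₂ ^ (β-1)) ^ 2) :=
          mul_le_mul_of_nonneg_left hxy (by positivity)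
      _ = β ^ 2 * (2 * M₁ ^ (2*(β-1)) + 2 * M₂ ^ (2*(β-1))) := by
          rw [e1 M₁ hM₁0, e1 M₂ hM₂0]
      _ = (4 * K ^ (2*(β-1))) * (β ^ 2 / 2) * (N₁ ^ (2*(β-1)) + N₂ ^ (2*(β-1))) := by
          rw [e2, e3]
          ring
      _ ≤ max 1 (4 * K ^ (2*(β-1))) * (β ^ 2 / 2) * (N₁ ^ (2*(β-1)) + N₂ ^ (2*(β-1))) := by
          apply mul_le_mul_of_nonneg_right _ hsum0
          exact mul_le_mul_of_nonneg_right (le_max_right _ _) (by positivity)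
  · -- the norm estimate
    have hemb₁ := embedding_bound P hs32 hκpos w₁ hw₁
    have hemb₂ := embedding_bound P hs32 hκpos w₂ hw₂
    have hptw : ∀ᵐ x : E3,
        ENNReal.ofReal ((1 + ‖x‖) ^ (2*(δ+2))) * (‖w₁ x ^ β - w₂ x ^ β‖₊ : ℝ≥0∞) ^ 2
          ≤ ENNReal.ofReal (Cd ^ 2) *
            (ENNReal.ofReal ((1 + ‖x‖) ^ (2*δ)) * (‖w₁ x - w₂ x‖₊ : ℝ≥0∞) ^ 2) := by
      filter_upwards [hemb₁, hemb₂] with x h1 h2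
      have hA1 : (1:ℝ) ≤ 1 + ‖x‖ := by linarith [norm_nonneg x]
      have hA0 : (0:ℝ) < 1 + ‖x‖ := by linarith
      have hApow : (0:ℝ) < (1 + ‖x‖) ^ ((3:ℝ)/2 + δ) := Real.rpow_pos_of_pos hA0 _
      have hc₁ : w₁ x ≤ M₁ * (1 + ‖x‖) ^ (-((3:ℝ)/2 + δ)) := by
        rw [abs_of_nonneg (hp₁ x)] at h1
        rw [Real.rpow_neg hA0.le, ← div_eq_mul_inv, le_div_iff₀ hApow, mul_comm]
        exact h1
      have hc₂ : w₂ x ≤ M₂ * (1 + ‖x‖) ^ (-((3:ℝ)/2 + δ)) := by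
        rw [abs_of_nonneg (hp₂ x)] at h2
        rw [Real.rpow_neg hA0.le, ← div_eq_mul_inv, le_div_iff₀ hApow, mul_comm]
        exact h2
      have hkey := pointwise_key (κ := (3:ℝ)/2 + δ) (δ := δ) hβ hA1 (hp₁ x) (hp₂ x)
        hM₁0 hM₂0 hκβ hc₁ hc₂
      rw [ennreal_repr _ _ (Real.rpow_nonneg hA0.le _),
        ennreal_repr _ _ (Real.rpow_nonneg hA0.le _),
        ← ENNReal.ofReal_mul (sq_nonneg Cd)]
      apply ENNReal.ofReal_le_ofReal
      calc (1 + ‖x‖) ^ (2*(δ+2)) * (w₁ x ^ β - w₂ x ^ β) ^ 2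
          ≤ (β * (M₁ ^ (β-1) + M₂ ^ (β-1))) ^ 2 *
            ((1 + ‖x‖) ^ (2*δ) * (w₁ x - w₂ x) ^ 2) := hkey
        _ = Cd ^ 2 * ((1 + ‖x‖) ^ (2*δ) * (w₁ x - w₂ x) ^ 2) := by rw [hCddef]
    -- finiteness of the right-hand side
    have hD1 := memL2_of_memH P hs32 w₁ hw₁
    have hD2 := memL2_of_memH P hs32 w₂ hw₂
    have hm₁ : AEMeasurable w₁ (volume : Measure E3) :=
      hw₁.1.aestronglyMeasurable.aemeasurable
    have hm₂ : AEMeasurable w₂ (volume : Measure E3) :=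
      hw₂.1.aestronglyMeasurable.aemeasurable
    have hwtc : Continuous (fun x : E3 => (1 + ‖x‖) ^ (2*δ)) := by
      apply Continuous.rpow_const (by fun_prop)
      intro x
      left
      positivity
    have hterm : ∀ (w : E3 → ℝ), AEMeasurable w (volume : Measure E3) →
        (∫⁻ x : E3, ENNReal.ofReal (2 * ((1 + ‖x‖) ^ (2*δ) * (w x) ^ 2)))
          = 2 * L2wNormSq δ w := by
      intro w hm
      have : ∀ x : E3, ENNReal.ofReal (2 * ((1 + ‖x‖) ^ (2*δ) * (w x) ^ 2))
          = 2 * (ENNReal.ofReal ((1 + ‖x‖) ^ (2*δ)) * (‖w x‖₊ : ℝ≥0∞) ^ 2) := by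
        intro x
        rw [ennreal_repr _ _ (Real.rpow_nonneg (by positivity) _),
          ENNReal.ofReal_mul (by norm_num : (0:ℝ) ≤ 2)]
        norm_num
      simp_rw [this]
      rw [lintegral_const_mul' _ _ (by norm_num : (2:ℝ≥0∞) ≠ ⊤)]
      rfl
    have hmeas1 : AEMeasurable
        (fun x : E3 => ENNReal.ofReal (2 * ((1 + ‖x‖) ^ (2*δ) * (w₁ x) ^ 2)))
        (volume : Measure E3) := by
      apply ENNReal.measurable_ofReal.comp_aemeasurable
      apply AEMeasurable.const_mul
      exact (hwtc.aemeasurable.mul (hm₁.mul hm₁)).congr (by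
        filter_upwards with x
        rw [sq]; rfl)
    have hDfin : L2wNormSq δ (fun x => w₁ x - w₂ x) < ⊤ := by
      have hb : ∀ x : E3,
          ENNReal.ofReal ((1 + ‖x‖) ^ (2*δ)) * (‖w₁ x - w₂ x‖₊ : ℝ≥0∞) ^ 2
            ≤ ENNReal.ofReal (2 * ((1 + ‖x‖) ^ (2*δ) * (w₁ x) ^ 2))
              + ENNReal.ofReal (2 * ((1 + ‖x‖) ^ (2*δ) * (w₂ x) ^ 2)) := by
        intro x
        rw [ennreal_repr _ _ (Real.rpow_nonneg (by positivity) _),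
          ← ENNReal.ofReal_add (by positivity) (by positivity)]
        apply ENNReal.ofReal_le_ofReal
        have hq : (w₁ x - w₂ x) ^ 2 ≤ 2 * (w₁ x) ^ 2 + 2 * (w₂ x) ^ 2 := by
          nlinarith [sq_nonneg (w₁ x + w₂ x)]
        have hwnn : (0:ℝ) ≤ (1 + ‖x‖) ^ (2*δ) := Real.rpow_nonneg (by positivity) _
        nlinarith [mul_le_mul_of_nonneg_left hq hwnn]
      calc L2wNormSq δ (fun x => w₁ x - w₂ x)
          ≤ ∫⁻ x : E3, (ENNReal.ofReal (2 * ((1 + ‖x‖) ^ (2*δ) * (w₁ x) ^ 2))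
              + ENNReal.ofReal (2 * ((1 + ‖x‖) ^ (2*δ) * (w₂ x) ^ 2))) :=
            lintegral_mono hb
        _ = (∫⁻ x : E3, ENNReal.ofReal (2 * ((1 + ‖x‖) ^ (2*δ) * (w₁ x) ^ 2)))
              + ∫⁻ x : E3, ENNReal.ofReal (2 * ((1 + ‖x‖) ^ (2*δ) * (w₂ x) ^ 2)) :=
            lintegral_add_left' hmeas1 _
        _ = 2 * L2wNormSq δ w₁ + 2 * L2wNormSq δ w₂ := by
            rw [hterm w₁ hm₁, hterm w₂ hm₂]
        _ < ⊤ := by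
            apply ENNReal.add_lt_top.2
            constructor
            · exact ENNReal.mul_lt_top (by norm_num) hD1
            · exact ENNReal.mul_lt_top (by norm_num) hD2
    have hLD : L2wNormSq (δ+2) (fun x => w₁ x ^ β - w₂ x ^ β)
        ≤ ENNReal.ofReal (Cd ^ 2) * L2wNormSq δ (fun x => w₁ x - w₂ x) := by
      rw [L2wNormSq, L2wNormSq, ← lintegral_const_mul' _ _ ENNReal.ofReal_ne_top]
      exact lintegral_mono_ae hptw
    have hRfin : ENNReal.ofReal (Cd ^ 2) * L2wNormSq δ (fun x => w₁ x - w₂ x) ≠ ⊤ :=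
      ENNReal.mul_ne_top ENNReal.ofReal_ne_top hDfin.ne
    have htr : (L2wNormSq (δ+2) (fun x => w₁ x ^ β - w₂ x ^ β)).toReal
        ≤ Cd ^ 2 * (L2wNormSq δ (fun x => w₁ x - w₂ x)).toReal := by
      have h := ENNReal.toReal_mono hRfin hLD
      rwa [ENNReal.toReal_mul, ENNReal.toReal_ofReal (sq_nonneg Cd)] at h
    rw [L2wNorm, L2wNorm]
    calc Real.sqrt ((L2wNormSq (δ+2) (fun x => w₁ x ^ β - w₂ x ^ β)).toReal)
        ≤ Real.sqrt (Cd ^ 2 * (L2wNormSq δ (fun x => w₁ x - w₂ x)).toReal) :=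
          Real.sqrt_le_sqrt htr
      _ = Cd * Real.sqrt ((L2wNormSq δ (fun x => w₁ x - w₂ x)).toReal) := by
          rw [Real.sqrt_mul (sq_nonneg Cd), Real.sqrt_sq hCd0]
end
end

section
/- Let X and Y be real Hilbert spaces with X ⊆ Y such that the inclusion map X → Y is continuous. Let K ⊆ X be a nonempty, convex, closed and bounded subset of X, and let Φ : K → K be a map for which there exists a constant Λ ∈ (0,1) with ‖Φ(x₁) − Φ(x₂)‖_Y ≤ Λ ‖x₁ − x₂‖_Y for all x₁, x₂ ∈ K. Then Φ admits a unique fixed point x* ∈ K, i.e. a unique x* ∈ K with Φ(x*) = x*. -/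
open Filter Topology

theorem nested_convex_inter
    {X : Type*} [NormedAddCommGroup X] [InnerProductSpace ℝ X] [CompleteSpace X]
    (C : ℕ → Set X) (hne : ∀ n, (C n).Nonempty) (hclosed : ∀ n, IsClosed (C n))
    (hconv : ∀ n, Convex ℝ (C n)) (hbdd : Bornology.IsBounded (C 0))
    (hnested : ∀ n, C (n + 1) ⊆ C n) :
    (⋂ n, C n).Nonempty := by
  have hanti : ∀ {n m : ℕ}, n ≤ m → C m ⊆ C n := by
    intro n m h
    induction h with
    | refl => exact subset_rfl
    | step h ih => exact (hnested _).trans (by exact ih)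
  have hproj : ∀ n, ∃ v ∈ C n, ‖(0 : X) - v‖ = ⨅ w : C n, ‖(0 : X) - w‖ := fun n =>
    exists_norm_eq_iInf_of_complete_convex (hne n) ((hclosed n).isComplete) (hconv n) 0
  choose p hpmem hpnorm using hproj
  set δ : ℕ → ℝ := fun n => ⨅ w : C n, ‖(0 : X) - w‖ with hδdef
  have hδnonneg : ∀ n, 0 ≤ δ n := fun n => by
    haveI : Nonempty (C n) := (hne n).to_subtype
    exact le_ciInf fun _ => norm_nonneg _
  have hpnorm' : ∀ n, ‖p n‖ = δ n := fun n => by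
    have := hpnorm n; rwa [zero_sub, norm_neg] at this
  have hδle : ∀ {n m : ℕ}, n ≤ m → ∀ w ∈ C m, δ n ≤ ‖w‖ := by
    intro n m h w hw
    have : δ n ≤ ‖(0:X) - w‖ :=
      ciInf_le (f := fun w : C n => ‖(0:X) - (w:X)‖) ⟨0, Set.forall_mem_range.2 fun _ => norm_nonneg _⟩ ⟨w, hanti h hw⟩
    rwa [zero_sub, norm_neg] at this
  have hδmono : Monotone δ := fun n m h => by
    rw [← hpnorm' m]; exact hδle h _ (hpmem m)
  obtain ⟨R, hR⟩ := hbdd.subset_closedBall 0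
  have hδbdd : ∀ n, δ n ≤ R := fun n => by
    rw [← hpnorm' n]
    have := hR (hanti (Nat.zero_le n) (hpmem n))
    simpa [Metric.mem_closedBall, dist_eq_norm] using this
  set L : ℝ := ⨆ n, δ n with hL
  have hδtendsto : Tendsto δ atTop (𝓝 L) :=
    tendsto_atTop_ciSup hδmono ⟨R, Set.forall_mem_range.2 hδbdd⟩
  have hδleL : ∀ n, δ n ≤ L := fun n => le_ciSup ⟨R, Set.forall_mem_range.2 hδbdd⟩ n
  have key : ∀ N n m, N ≤ n → N ≤ m → dist (p n) (p m) ≤ 2 * Real.sqrt (L ^ 2 - δ N ^ 2) := by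
    intro N n m hn hm
    have hz : (1/2 : ℝ) • p n + (1/2 : ℝ) • p m ∈ C N :=
      hconv N (hanti hn (hpmem n)) (hanti hm (hpmem m)) (by norm_num) (by norm_num) (by norm_num)
    have hmid : δ N ≤ (1/2 : ℝ) * ‖p n + p m‖ := by
      have h1 := hδle le_rfl _ hz
      have h2 : ‖(1/2 : ℝ) • p n + (1/2 : ℝ) • p m‖ = (1/2 : ℝ) * ‖p n + p m‖ := by
        rw [← smul_add, norm_smul]; norm_num
      linarith [h1.trans_eq h2]
    have hpar := parallelogram_law_with_norm ℝ (p n) (p m)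
    have hsq : ‖p n - p m‖ ^ 2 ≤ 4 * (L ^ 2 - δ N ^ 2) := by
      have h1 : ‖p n‖ ≤ L := (hpnorm' n).le.trans (hδleL n)
      have h2 : ‖p m‖ ≤ L := (hpnorm' m).le.trans (hδleL m)
      nlinarith [norm_nonneg (p n), norm_nonneg (p m), hδnonneg N, norm_nonneg (p n + p m)]
    have := Real.sqrt_le_sqrt hsq
    rw [Real.sqrt_sq (norm_nonneg _), show (4:ℝ) * (L^2 - δ N ^2) = 2^2 * (L^2 - δ N^2) by ring,
      Real.sqrt_mul (by positivity), Real.sqrt_sq (by norm_num)] at this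
    rwa [dist_eq_norm]
  have hb0 : Tendsto (fun N => 2 * Real.sqrt (L ^ 2 - δ N ^ 2)) atTop (𝓝 0) := by
    have h1 : Tendsto (fun N => L ^ 2 - δ N ^ 2) atTop (𝓝 0) := by
      have := ((hδtendsto.pow 2).const_sub (L ^ 2))
      simpa using this
    have h2 := (Real.continuous_sqrt.tendsto 0).comp h1
    simpa using h2.const_mul 2
  have hcauchy : CauchySeq p := cauchySeq_of_le_tendsto_0 _ (fun n m N hn hm => key N n m hn hm) hb0
  obtain ⟨x, hx⟩ := cauchySeq_tendsto_of_complete hcauchy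
  refine ⟨x, Set.mem_iInter.2 fun n => ?_⟩
  have : ∀ᶠ m in atTop, p m ∈ C n := eventually_atTop.2 ⟨n, fun m hm => hanti hm (hpmem m)⟩
  exact (hclosed n).mem_of_tendsto hx this



/-- Modified Banach fixed-point theorem.
Let `X ⊆ Y` be real Hilbert spaces with continuous inclusion `j`, `K ⊆ X` nonempty,
convex, closed and bounded, and `Φ : K → K` a contraction with respect to the
`Y`-norm with constant `Λ ∈ (0,1)`. Then `Φ` has a unique fixed point in `K`. -/
theorem modified_banach_fixed_point
    {X Y : Type*}
    [NormedAddCommGroup X] [InnerProductSpace ℝ X] [CompleteSpace X]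
    [NormedAddCommGroup Y] [InnerProductSpace ℝ Y] [CompleteSpace Y]
    (j : X →ₗ[ℝ] Y) (hj_cont : Continuous j) (hj_inj : Function.Injective j)
    (K : Set X) (hK_ne : K.Nonempty) (hK_conv : Convex ℝ K)
    (hK_closed : IsClosed K) (hK_bdd : Bornology.IsBounded K)
    (Φ : X → X) (hΦ : Set.MapsTo Φ K K)
    (Λ : ℝ) (hΛ0 : 0 < Λ) (hΛ1 : Λ < 1)
    (hcontr : ∀ x₁ ∈ K, ∀ x₂ ∈ K, ‖j (Φ x₁) - j (Φ x₂)‖ ≤ Λ * ‖j x₁ - j x₂‖) :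
    ∃! x : X, x ∈ K ∧ Φ x = x := by
  classical
  obtain ⟨x0, hx0⟩ := hK_ne
  set u : ℕ → X := fun n => Φ^[n] x0 with hu
  have humem : ∀ n, u n ∈ K := by
    intro n; induction n with
    | zero => exact hx0
    | succ n ih =>
      show Φ^[n+1] x0 ∈ K
      rw [Function.iterate_succ_apply']
      exact hΦ ih
  have husucc : ∀ n, u (n + 1) = Φ (u n) := fun n => Function.iterate_succ_apply' Φ n x0
  -- geometric estimate
  have hgeo : ∀ n, dist (j (u n)) (j (u (n + 1))) ≤ ‖j (u 0) - j (u 1)‖ * Λ ^ n := by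
    intro n; induction n with
    | zero => simp [dist_eq_norm]
    | succ n ih =>
      rw [dist_eq_norm] at ih ⊢
      calc ‖j (u (n+1)) - j (u (n+2))‖ = ‖j (Φ (u n)) - j (Φ (u (n+1)))‖ := by
            simp only [husucc]
        _ ≤ Λ * ‖j (u n) - j (u (n+1))‖ := hcontr _ (humem n) _ (humem (n+1))
        _ ≤ Λ * (‖j (u 0) - j (u 1)‖ * Λ ^ n) := by
            exact mul_le_mul_of_nonneg_left ih hΛ0.le
        _ = ‖j (u 0) - j (u 1)‖ * Λ ^ (n+1) := by ring
  have hcauchy : CauchySeq (fun n => j (u n)) :=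
    cauchySeq_of_le_geometric Λ _ hΛ1 hgeo
  obtain ⟨y, hy⟩ := cauchySeq_tendsto_of_complete hcauchy
  -- the nested sets
  have hN : ∀ n : ℕ, ∃ N, ∀ m ≥ N, dist (j (u m)) y ≤ 1 / (n + 1) := by
    intro n
    have := (hy.eventually (Metric.closedBall_mem_nhds y (by positivity : (0:ℝ) < 1/(n+1))))
    simpa [Metric.mem_closedBall, eventually_atTop] using this
  choose N hNspec using hN
  set C : ℕ → Set X := fun n => K ∩ j ⁻¹' Metric.closedBall y (1 / (n + 1)) with hC
  have hCne : ∀ n, (C n).Nonempty := fun n =>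
    ⟨u (N n), humem _, by simpa [Metric.mem_closedBall] using hNspec n (N n) le_rfl⟩
  have hCclosed : ∀ n, IsClosed (C n) := fun n =>
    hK_closed.inter (Metric.isClosed_closedBall.preimage hj_cont)
  have hCconv : ∀ n, Convex ℝ (C n) := fun n =>
    hK_conv.inter ((convex_closedBall y (1 / (n + 1))).linear_preimage j)
  have hCnested : ∀ n, C (n + 1) ⊆ C n := by
    intro n x hx
    refine ⟨hx.1, ?_⟩
    have := hx.2
    simp only [Set.mem_preimage, Metric.mem_closedBall] at this ⊢
    refine this.trans ?_
    rw [div_le_div_iff₀ (by positivity) (by positivity)]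
    push_cast; linarith
  obtain ⟨x, hx⟩ := nested_convex_inter C hCne hCclosed hCconv
    (hK_bdd.subset Set.inter_subset_left) hCnested
  simp only [Set.mem_iInter] at hx
  have hxK : x ∈ K := (hx 0).1
  have hjx : j x = y := by
    have hdist : ∀ n : ℕ, dist (j x) y ≤ 1 / (n + 1) := fun n => (hx n).2
    have : dist (j x) y ≤ 0 :=
      ge_of_tendsto' tendsto_one_div_add_atTop_nhds_zero_nat fun n => hdist n
    have := le_antisymm this dist_nonneg
    rwa [dist_eq_zero] at this
  -- fixed point
  have hfix : Φ x = x := by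
    apply hj_inj
    have h1 : ∀ m, ‖j (Φ x) - j x‖ ≤ Λ * dist (j x) (j (u m)) + dist (j (u (m+1))) (j x) := by
      intro m
      calc ‖j (Φ x) - j x‖ ≤ ‖j (Φ x) - j (u (m+1))‖ + ‖j (u (m+1)) - j x‖ :=
            norm_sub_le_norm_sub_add_norm_sub _ _ _
        _ ≤ Λ * ‖j x - j (u m)‖ + ‖j (u (m+1)) - j x‖ := by
            rw [husucc m]
            exact add_le_add_left (hcontr _ hxK _ (humem m)) _
        _ = Λ * dist (j x) (j (u m)) + dist (j (u (m+1))) (j x) := by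
            rw [dist_eq_norm, dist_eq_norm]
    have h2 : Tendsto (fun m => Λ * dist (j x) (j (u m)) + dist (j (u (m+1))) (j x))
        atTop (𝓝 0) := by
      have ha : Tendsto (fun m => dist (j x) (j (u m))) atTop (𝓝 0) := by
        have := (tendsto_const_nhds (x := j x) (f := atTop (α := ℕ))).dist hy
        simpa [hjx] using this
      have hb : Tendsto (fun m => dist (j (u (m+1))) (j x)) atTop (𝓝 0) := by
        have := (hy.comp (tendsto_add_atTop_nat 1)).dist
          (tendsto_const_nhds (x := j x) (f := atTop (α := ℕ)))
        simpa [hjx, Function.comp] using this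
      simpa using (ha.const_mul Λ).add hb
    have : ‖j (Φ x) - j x‖ ≤ 0 := ge_of_tendsto' h2 h1
    have := le_antisymm this (norm_nonneg _)
    rwa [norm_sub_eq_zero_iff] at this
  refine ⟨x, ⟨hxK, hfix⟩, ?_⟩
  rintro z ⟨hzK, hzfix⟩
  apply hj_inj
  have h := hcontr z hzK x hxK
  rw [hzfix, hfix] at h
  have : (1 - Λ) * ‖j z - j x‖ ≤ 0 := by linarith
  have hz0 : ‖j z - j x‖ ≤ 0 := by nlinarith
  have := le_antisymm hz0 (norm_nonneg _)
  rwa [norm_sub_eq_zero_iff] at this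
end
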